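/- For every p ∈ (0,1], λ > 0 and h ∈ ℝ with h < 1 − (2d − (1 − p)) log 2 / (pλ), one has Φ_p(λ,h) > λh, i.e. the polymer is localized; in particular the localized region L_p = {(λ,h) ∈ (0,∞) × ℝ : Φ_p(λ,h) > λh} is nonempty. -/

import Mathlib

/- A heteropolymer in a medium with random droplets (Wüthrich, Ann. Appl. Probab. 2006).

A path in `C^{k+m}_{k,x}` is encoded by its sequence of `m` increments: at each step every
one of the `d` coordinates changes by `±1`, so an increment is an element of `Fin d → Bool`
(`true` = `+1`, `false` = `-1`).  The uniform measure on paths corresponds to the uniform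
measure on step sequences, so expectations under `P^{k+m}_{k,x}` are normalized sums over
all step sequences. -/

open MeasureTheory Filter Real

namespace Hetero

variable (d : ℕ)

/-- Step sequences of length `m`. -/
abbrev Steps (m : ℕ) := Fin m → Fin d → Bool

/-- Position (in `ℤ^d`) after `j` steps of the walk started at `x`. -/
def pos (x : Fin d → ℤ) {m : ℕ} (s : Steps d m) (j : ℕ) : Fin d → ℤ :=
  fun c => x c + ∑ i ∈ Finset.range j,
    (if hi : i < m then (if s ⟨i, hi⟩ c then 1 else -1) else 0)

/-- `Δ_η(S_i)`: `-1` if the walk is at the origin (of `ℤ^d`) and there is a droplet there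
(`η_i = 1`), and `+1` otherwise. -/
noncomputable def del (et : ℤ → ℝ) (t : ℤ) (y : Fin d → ℤ) : ℝ :=
  if y = 0 ∧ et t = 1 then -1 else 1

/-- Energy `λ ∑_{i=k+1}^{k+m} Δ_η(S_i)(ω_i + h)` of the polymer started at time `k`
at site `x`, performing the `m` steps `s`. -/
noncomputable def ham (lam h : ℝ) (om et : ℤ → ℝ) (k : ℤ) (x : Fin d → ℤ) {m : ℕ}
    (s : Steps d m) : ℝ :=
  lam * ∑ j ∈ Finset.Icc 1 m, del d et (k + (j : ℤ)) (pos d x s j) * (om (k + (j : ℤ)) + h)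

/-- Partition sum `Z^{k+m}_{k,x}(ω,η)`. -/
noncomputable def Z (lam h : ℝ) (om et : ℤ → ℝ) (k : ℤ) (x : Fin d → ℤ) (m : ℕ) : ℝ :=
  (∑ s : Steps d m, Real.exp (ham d lam h om et k x s)) / 2 ^ (d * m)

/-- Restricted partition sum `Ẑ^{k+m}_{k,x}(ω,η)` (only paths ending at the origin). -/
noncomputable def Zhat (lam h : ℝ) (om et : ℤ → ℝ) (k : ℤ) (x : Fin d → ℤ) (m : ℕ) : ℝ :=
  (∑ s : Steps d m, Set.indicator {s : Steps d m | pos d x s m = 0}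
      (fun s => Real.exp (ham d lam h om et k x s)) s) / 2 ^ (d * m)

/-- `Ψ^{k+m}_{k,x}(ω,η) = E^{k+m}_{k,x}[exp{λ ∑ (Δ_η(S_i) - 1)(ω_i + h)}]`. -/
noncomputable def Psi (lam h : ℝ) (om et : ℤ → ℝ) (k : ℤ) (x : Fin d → ℤ) (m : ℕ) : ℝ :=
  (∑ s : Steps d m, Real.exp (lam * ∑ j ∈ Finset.Icc 1 m,
      (del d et (k + (j : ℤ)) (pos d x s j) - 1) * (om (k + (j : ℤ)) + h))) / 2 ^ (d * m)

/-- Quenched polymer probability `Q^{k+m}_{k,x}[A](ω,η)` of a path event `A`. -/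
noncomputable def Qprob (lam h : ℝ) (om et : ℤ → ℝ) (k : ℤ) (x : Fin d → ℤ) (m : ℕ)
    (A : Set (Steps d m)) : ℝ :=
  (∑ s : Steps d m, Set.indicator A (fun s => Real.exp (ham d lam h om et k x s)) s) /
    (∑ s : Steps d m, Real.exp (ham d lam h om et k x s))

/-- Simple-random-walk probability `P^{k+m}_{k,x}[A]` of a path event `A` (it does not
depend on `k` and `x`, which only shift the path). -/
noncomputable def Pprob (m : ℕ) (A : Set (Steps d m)) : ℝ :=
  (∑ s : Steps d m, Set.indicator A (fun _ => (1 : ℝ)) s) / 2 ^ (d * m)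

/-- Probability that the `m`-step walk started at the origin does not revisit the origin. -/
noncomputable def noReturn (m : ℕ) : ℝ :=
  Pprob d m {s : Steps d m | ∀ i, 1 ≤ i → i ≤ m → pos d 0 s i ≠ 0}

/-- `α(d) = P^∞_{0,0}[w(i) ≠ 0 for all i ≥ 1]`: the probability that the walk never
returns to the origin.  By continuity from above it is the (decreasing) limit, i.e. the
infimum, of the finite-horizon no-return probabilities. -/
noncomputable def alpha : ℝ := ⨅ m : ℕ, noReturn d m

/-- `N_m`: number of returns of the walk (started at the origin) to the origin in `(0, m]`. -/
def Nret (m : ℕ) (s : Steps d m) : ℕ :=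
  ((Finset.Icc 1 m).filter (fun i => pos d 0 s i = 0)).card

/-- Euclidean norm of a point of `ℤ^d`. -/
noncomputable def nrm (x : Fin d → ℤ) : ℝ := Real.sqrt (∑ c, ((x c : ℝ)) ^ 2)

-- basic pos lemmas

lemma pos_zero (x : Fin d → ℤ) {m : ℕ} (s : Steps d m) : pos d x s 0 = x := by
  funext c; simp [pos]

lemma pos_succ (x : Fin d → ℤ) {m : ℕ} (s : Steps d m) {j : ℕ} (hj : j < m) (c : Fin d) :
    pos d x s (j+1) c = pos d x s j c + (if s ⟨j, hj⟩ c then 1 else -1) := by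
  simp only [pos, Finset.sum_range_succ, dif_pos hj]
  ring

lemma pos_parity {m : ℕ} (s : Steps d m) (t : ℕ) (ht : t ≤ m) (c : Fin d) :
    Even (pos d 0 s t c - (t : ℤ)) := by
  induction t with
  | zero => simp [pos_zero]
  | succ n ih =>
    have hn : n < m := ht
    have := ih (Nat.le_of_succ_le ht)
    rw [pos_succ d 0 s hn c]
    rcases this with ⟨k, hk⟩
    by_cases hb : s ⟨n, hn⟩ c
    · refine ⟨k, ?_⟩; rw [if_pos hb]; push_cast; linarith
    · refine ⟨k - 1, ?_⟩; rw [if_neg hb]; push_cast; linarith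

lemma pos_odd_ne_zero (hd : 1 ≤ d) {m : ℕ} (s : Steps d m) (t : ℕ) (ht : t ≤ m)
    (hodd : Odd t) : pos d 0 s t ≠ 0 := by
  intro h0
  have := pos_parity d s t ht ⟨0, hd⟩
  rw [h0] at this
  simp only [Pi.zero_apply, zero_sub] at this
  rw [even_neg, Int.even_coe_nat] at this
  exact (Nat.not_even_iff_odd.mpr hodd) this


-- environment-dependent strategy

/-- `B_k`: droplet present and negative field at time `2k`. -/
def Bq (w e : ℤ → ℝ) (k : ℕ) : Prop := e (2*(k:ℤ)) = 1 ∧ w (2*(k:ℤ)) = -1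

/-- twice the first basis vector -/
def two1 : Fin d → ℤ := fun c => if c.val = 0 then 2 else 0

open scoped Classical in
/-- target position at even time `2k` -/
noncomputable def zz (w e : ℤ → ℝ) (k : ℕ) : Fin d → ℤ :=
  if k = 0 ∨ Bq w e k then 0 else two1 d

/-- pairs whose first-step bit in coordinate `0` is constrained -/
def condP (w e : ℤ → ℝ) (j : ℕ) : Prop := j = 0 ∨ (1 ≤ j ∧ Bq w e j) ∨ Bq w e (j+1)

open scoped Classical in
/-- first step of pair `j` -/
noncomputable def fstep (w e : ℤ → ℝ) {r : ℕ} (a : Fin r → Fin d → Bool) (j : Fin r) :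
    Fin d → Bool := fun c =>
  if c.val = 0 ∧ condP w e j.val then decide (zz d w e (j.val+1) ≠ 0) else a j c

open scoped Classical in
/-- second step of pair `j` -/
noncomputable def sstep (w e : ℤ → ℝ) {r : ℕ} (a : Fin r → Fin d → Bool) (j : Fin r) :
    Fin d → Bool := fun c =>
  if c.val = 0 ∧ zz d w e j.val ≠ zz d w e (j.val+1) then fstep d w e a j c
  else !(fstep d w e a j c)

/-- the full step sequence -/
noncomputable def FF (w e : ℤ → ℝ) (r : ℕ) (a : Fin r → Fin d → Bool) : Steps d (2*r) :=
  fun i => if i.val % 2 = 0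
    then fstep d w e a ⟨i.val/2, by omega⟩
    else sstep d w e a ⟨i.val/2, by omega⟩

lemma two1_ne_zero (hd : 1 ≤ d) : two1 d ≠ 0 := by
  intro h
  have := congrFun h ⟨0, hd⟩
  simp [two1] at this

lemma zz_zero_or (w e : ℤ → ℝ) (k : ℕ) : zz d w e k = 0 ∨ zz d w e k = two1 d := by
  unfold zz; split <;> simp

lemma zz_apply_ne (w e : ℤ → ℝ) (k : ℕ) {c : Fin d} (hc : ¬ c.val = 0) :
    zz d w e k c = 0 := by
  rcases zz_zero_or d w e k with h | h <;> rw [h]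
  · rfl
  · simp [two1, hc]

lemma condP_of_trans (w e : ℤ → ℝ) (j : ℕ) (h : zz d w e j ≠ zz d w e (j+1)) :
    condP w e j := by
  by_cases hj : j = 0
  · exact Or.inl hj
  by_cases h1 : Bq w e j
  · exact Or.inr (Or.inl ⟨Nat.one_le_iff_ne_zero.mpr hj, h1⟩)
  by_cases h2 : Bq w e (j+1)
  · exact Or.inr (Or.inr h2)
  exfalso
  apply h
  unfold zz
  rw [if_neg (by tauto), if_neg (by push_neg; exact ⟨by omega, h2⟩)]


lemma FF_even (w e : ℤ → ℝ) {r : ℕ} (a : Fin r → Fin d → Bool) {k : ℕ} (hk : k < r) :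
    FF d w e r a ⟨2*k, by omega⟩ = fstep d w e a ⟨k, hk⟩ := by
  unfold FF
  rw [if_pos (show 2*k % 2 = 0 by omega)]
  exact congrArg (fun j => fstep d w e a j) (Fin.ext (show 2*k/2 = k by omega))

lemma FF_odd (w e : ℤ → ℝ) {r : ℕ} (a : Fin r → Fin d → Bool) {k : ℕ} (hk : k < r) :
    FF d w e r a ⟨2*k+1, by omega⟩ = sstep d w e a ⟨k, hk⟩ := by
  unfold FF
  rw [if_neg (show ¬ (2*k+1) % 2 = 0 by omega)]
  exact congrArg (fun j => sstep d w e a j) (Fin.ext (show (2*k+1)/2 = k by omega))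

lemma cancel_incr (b : Bool) : (if b then (1:ℤ) else -1) + (if !b then (1:ℤ) else -1) = 0 := by
  cases b <;> simp

lemma pos_FF_even (w e : ℤ → ℝ) {r : ℕ} (a : Fin r → Fin d → Bool) (k : ℕ) (hk : k ≤ r) :
    pos d 0 (FF d w e r a) (2*k) = zz d w e k := by
  induction k with
  | zero => rw [pos_zero]; unfold zz; rw [if_pos (Or.inl rfl)]
  | succ k ih =>
    have hkr : k < r := hk
    have ihz := ih (le_of_lt hkr)
    funext c
    have h1 : 2*(k+1) = (2*k+1)+1 := by ring
    have hlt1 : 2*k+1 < 2*r := by omega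
    have hlt0 : 2*k < 2*r := by omega
    rw [h1, pos_succ d 0 (FF d w e r a) hlt1 c, pos_succ d 0 (FF d w e r a) hlt0 c]
    have hFe : (⟨2*k, hlt0⟩ : Fin (2*r)) = ⟨2*k, by omega⟩ := rfl
    rw [hFe, FF_even d w e a hkr]
    have hFo : (⟨2*k+1, hlt1⟩ : Fin (2*r)) = ⟨2*k+1, by omega⟩ := rfl
    rw [hFo, FF_odd d w e a hkr]
    rw [congrFun ihz c]
    by_cases hc : c.val = 0
    · by_cases htr : zz d w e k = zz d w e (k+1)
      · rw [show sstep d w e a ⟨k, hkr⟩ c = !(fstep d w e a ⟨k, hkr⟩ c) from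
          by unfold sstep; rw [if_neg (by push_neg; intro; simpa using htr)]]
        rw [add_assoc, cancel_incr, add_zero, htr]
      · have hcond : condP w e k := condP_of_trans d w e k htr
        have hfs : fstep d w e a ⟨k, hkr⟩ c = decide (zz d w e (k+1) ≠ 0) := by
          unfold fstep; rw [if_pos ⟨hc, hcond⟩]
        have hss : sstep d w e a ⟨k, hkr⟩ c = fstep d w e a ⟨k, hkr⟩ c := by
          unfold sstep; rw [if_pos ⟨hc, htr⟩]
        rw [hss, hfs]
        by_cases hz : zz d w e (k+1) = 0
        · have hdec : decide (zz d w e (k+1) ≠ 0) = false :=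
            decide_eq_false (not_not_intro hz)
          have hzk : zz d w e k = two1 d := by
            rcases zz_zero_or d w e k with h | h
            · exact absurd (h.trans hz.symm) htr
            · exact h
          rw [hdec, hz, hzk]
          simp only [Bool.false_eq_true, if_false, two1, if_pos hc, Pi.zero_apply]
          ring
        · have hdec : decide (zz d w e (k+1) ≠ 0) = true := decide_eq_true hz
          have hz1 : zz d w e (k+1) = two1 d := by
            rcases zz_zero_or d w e (k+1) with h | h
            · exact absurd h hz
            · exact h
          have hzk : zz d w e k = 0 := by
            rcases zz_zero_or d w e k with h | h
            · exact h
            · exact absurd (h.trans hz1.symm) htr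
          rw [hdec, hzk, hz1]
          simp only [if_true, two1, if_pos hc, Pi.zero_apply]
          ring
    · rw [show sstep d w e a ⟨k, hkr⟩ c = !(fstep d w e a ⟨k, hkr⟩ c) from
        by unfold sstep; rw [if_neg (by push_neg; intro h; exact absurd h hc)]]
      rw [add_assoc, cancel_incr, add_zero]
      rw [zz_apply_ne d w e k hc, zz_apply_ne d w e (k+1) hc]


lemma sum_Icc_pair (f : ℕ → ℝ) (r : ℕ) :
    ∑ j ∈ Finset.Icc 1 (2*r), f j = ∑ k ∈ Finset.Icc 1 r, (f (2*k-1) + f (2*k)) := by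
  induction r with
  | zero => simp
  | succ r ih =>
    have e1 : 2*(r+1)-1 = 2*r+1 := by omega
    have e2 : 2*(r+1) = 2*r+1+1 := by omega
    rw [Finset.sum_Icc_succ_top (show 1 ≤ r+1 by omega) (fun k => f (2*k-1) + f (2*k)),
        e1, e2,
        Finset.sum_Icc_succ_top (show 1 ≤ 2*r+1+1 by omega) f,
        Finset.sum_Icc_succ_top (show 1 ≤ 2*r+1 by omega) f, ih]
    ring

open scoped Classical in
lemma ham_FF (hd : 1 ≤ d) (lam h : ℝ) (w e : ℤ → ℝ) (r : ℕ) (a : Fin r → Fin d → Bool) :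
    ham d lam h w e 0 0 (FF d w e r a)
      = lam * ((∑ i ∈ Finset.Icc 1 (2*r), (w (i:ℤ) + h))
          + 2*(1-h) * ∑ k ∈ Finset.Icc 1 r, (if Bq w e k then (1:ℝ) else 0)) := by
  unfold ham
  simp only [zero_add]
  rw [sum_Icc_pair (fun j => del d e (j:ℤ) (pos d 0 (FF d w e r a) j) * (w (j:ℤ) + h)) r]
  rw [sum_Icc_pair (fun i => w (i:ℤ) + h) r]
  congr 1
  rw [Finset.mul_sum, ← Finset.sum_add_distrib]
  apply Finset.sum_congr rfl
  intro k hk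
  obtain ⟨hk1, hk2⟩ := Finset.mem_Icc.mp hk
  have hodd : del d e ((2*k-1 : ℕ):ℤ) (pos d 0 (FF d w e r a) (2*k-1)) = 1 := by
    unfold del
    rw [if_neg]
    rintro ⟨h0, -⟩
    exact pos_odd_ne_zero d hd (FF d w e r a) (2*k-1) (by omega) ⟨k-1, by omega⟩ h0
  have heven : pos d 0 (FF d w e r a) (2*k) = zz d w e k := pos_FF_even d w e a k hk2
  have hc2 : ((2*k : ℕ) : ℤ) = 2*(k:ℤ) := by push_cast; ring
  by_cases hB : Bq w e k
  · have hz : zz d w e k = 0 := by unfold zz; rw [if_pos (Or.inr hB)]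
    have hdel : del d e ((2*k : ℕ):ℤ) (pos d 0 (FF d w e r a) (2*k)) = -1 := by
      unfold del
      rw [if_pos]
      refine ⟨heven.trans hz, ?_⟩
      rw [hc2]; exact hB.1
    rw [hodd, hdel, if_pos hB]
    have hw : w ((2*k : ℕ):ℤ) = -1 := by rw [hc2]; exact hB.2
    rw [hw]; ring
  · have hz : zz d w e k = two1 d := by
      unfold zz; rw [if_neg]; push_neg; exact ⟨by omega, hB⟩
    have hdel : del d e ((2*k : ℕ):ℤ) (pos d 0 (FF d w e r a) (2*k)) = 1 := by
      unfold del
      rw [if_neg]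
      rintro ⟨h0, -⟩
      exact two1_ne_zero d hd (by rw [← hz, ← heven]; exact h0)
    rw [hodd, hdel, if_neg hB]
    ring


open scoped Classical in
noncomputable def Psi2 (w e : ℤ → ℝ) (r : ℕ) (u : Fin r → Fin d → Bool) :
    Fin r → Fin d → Bool := fun j => fstep d w e u j

lemma fstep_Psi2 (w e : ℤ → ℝ) {r : ℕ} (u : Fin r → Fin d → Bool) (j : Fin r) :
    fstep d w e (Psi2 d w e r u) j = fstep d w e u j := by
  funext c
  unfold fstep
  by_cases hc : c.val = 0 ∧ condP w e j.val
  · rw [if_pos hc, if_pos hc]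
  · rw [if_neg hc, if_neg hc]
    unfold Psi2 fstep
    rw [if_neg hc]

lemma FF_Psi2 (w e : ℤ → ℝ) {r : ℕ} (u : Fin r → Fin d → Bool) :
    FF d w e r (Psi2 d w e r u) = FF d w e r u := by
  funext i
  unfold FF
  by_cases hi : i.val % 2 = 0
  · rw [if_pos hi, if_pos hi, fstep_Psi2]
  · rw [if_neg hi, if_neg hi]
    unfold sstep
    rw [fstep_Psi2]

lemma Psi2_apply_cond (w e : ℤ → ℝ) {r : ℕ} (u : Fin r → Fin d → Bool) (j : Fin r)
    (c : Fin d) (hc : c.val = 0 ∧ condP w e j.val) :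
    Psi2 d w e r u j c = decide (zz d w e (j.val+1) ≠ 0) := by
  unfold Psi2 fstep; rw [if_pos hc]

lemma Psi2_apply_ncond (w e : ℤ → ℝ) {r : ℕ} (u : Fin r → Fin d → Bool) (j : Fin r)
    (c : Fin d) (hc : ¬ (c.val = 0 ∧ condP w e j.val)) :
    Psi2 d w e r u j c = u j c := by
  unfold Psi2 fstep; rw [if_neg hc]

lemma FF_injOn (w e : ℤ → ℝ) (r : ℕ) :
    ∀ x ∈ Finset.image (Psi2 d w e r) Finset.univ,
    ∀ y ∈ Finset.image (Psi2 d w e r) Finset.univ,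
      FF d w e r x = FF d w e r y → x = y := by
  intro x hx y hy hFF
  obtain ⟨u, -, hu⟩ := Finset.mem_image.mp hx
  obtain ⟨v, -, hv⟩ := Finset.mem_image.mp hy
  funext j c
  by_cases hc : c.val = 0 ∧ condP w e j.val
  · rw [← hu, ← hv, Psi2_apply_cond d w e u j c hc, Psi2_apply_cond d w e v j c hc]
  · have hj : j.val < r := j.isLt
    have h1 : FF d w e r x ⟨2*j.val, by omega⟩ = fstep d w e x ⟨j.val, hj⟩ :=
      FF_even d w e x hj
    have h2 : FF d w e r y ⟨2*j.val, by omega⟩ = fstep d w e y ⟨j.val, hj⟩ :=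
      FF_even d w e y hj
    have hje : (⟨j.val, hj⟩ : Fin r) = j := Fin.eta j hj
    rw [hje] at h1 h2
    rw [← hFF] at h2
    have hfxy := congrFun (h1.symm.trans h2) c
    have hx' : fstep d w e x j c = x j c := by unfold fstep; rw [if_neg hc]
    have hy' : fstep d w e y j c = y j c := by unfold fstep; rw [if_neg hc]
    rw [← hx', ← hy', hfxy]


open scoped Classical in
lemma card_condP_le (w e : ℤ → ℝ) (r : ℕ) :
    (Finset.univ.filter (fun j : Fin r => condP w e j.val)).card
      ≤ 1 + 2 * ((Finset.Icc 1 r).filter (Bq w e)).card := by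
  set N := ((Finset.Icc 1 r).filter (Bq w e)).card with hN
  have hsub : (Finset.univ.filter (fun j : Fin r => condP w e j.val))
      ⊆ (Finset.univ.filter (fun j : Fin r => j.val = 0))
        ∪ ((Finset.univ.filter (fun j : Fin r => 1 ≤ j.val ∧ Bq w e j.val))
        ∪ (Finset.univ.filter (fun j : Fin r => Bq w e (j.val+1)))) := by
    intro j hj
    rcases (Finset.mem_filter.mp hj).2 with h | h | h
    · exact Finset.mem_union_left _ (Finset.mem_filter.mpr ⟨Finset.mem_univ _, h⟩)
    · exact Finset.mem_union_right _
        (Finset.mem_union_left _ (Finset.mem_filter.mpr ⟨Finset.mem_univ _, h⟩))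
    · exact Finset.mem_union_right _
        (Finset.mem_union_right _ (Finset.mem_filter.mpr ⟨Finset.mem_univ _, h⟩))
  have h0 : (Finset.univ.filter (fun j : Fin r => j.val = 0)).card ≤ 1 := by
    apply Finset.card_le_one.mpr
    intro a ha b hb
    exact Fin.ext (((Finset.mem_filter.mp ha).2).trans ((Finset.mem_filter.mp hb).2).symm)
  have h1 : (Finset.univ.filter (fun j : Fin r => 1 ≤ j.val ∧ Bq w e j.val)).card ≤ N := by
    apply Finset.card_le_card_of_injOn (fun j => j.val)
    · intro j hj
      obtain ⟨hj1, hj2⟩ := (Finset.mem_filter.mp hj).2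
      exact Finset.mem_filter.mpr ⟨Finset.mem_Icc.mpr ⟨hj1, le_of_lt j.isLt⟩, hj2⟩
    · intro a _ b _ hab
      exact Fin.ext hab
  have h2 : (Finset.univ.filter (fun j : Fin r => Bq w e (j.val+1))).card ≤ N := by
    apply Finset.card_le_card_of_injOn (fun j => j.val + 1)
    · intro j hj
      refine Finset.mem_filter.mpr ⟨Finset.mem_Icc.mpr ⟨by show 1 ≤ j.val + 1; omega, ?_⟩,
        (Finset.mem_filter.mp hj).2⟩
      have := j.isLt; show j.val + 1 ≤ r; omega
    · intro a _ b _ hab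
      have hab' : a.val + 1 = b.val + 1 := hab
      exact Fin.ext (by omega)
  have := Finset.card_le_card hsub
  have hu1 := Finset.card_union_le
    (Finset.univ.filter (fun j : Fin r => j.val = 0))
    ((Finset.univ.filter (fun j : Fin r => 1 ≤ j.val ∧ Bq w e j.val))
      ∪ (Finset.univ.filter (fun j : Fin r => Bq w e (j.val+1))))
  have hu2 := Finset.card_union_le
    (Finset.univ.filter (fun j : Fin r => 1 ≤ j.val ∧ Bq w e j.val))
    (Finset.univ.filter (fun j : Fin r => Bq w e (j.val+1)))
  omega

open scoped Classical in
lemma fiber_card_le (hd : 1 ≤ d) (w e : ℤ → ℝ) (r : ℕ) (b : Fin r → Fin d → Bool) :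
    (Finset.univ.filter (fun u : Fin r → Fin d → Bool => Psi2 d w e r u = b)).card
      ≤ 2 ^ (1 + 2 * ((Finset.Icc 1 r).filter (Bq w e)).card) := by
  have key : (Finset.univ.filter
        (fun u : Fin r → Fin d → Bool => Psi2 d w e r u = b)).card
      ≤ 2 ^ (Finset.univ.filter (fun j : Fin r => condP w e j.val)).card := by
    have hmain := Finset.card_le_card_of_injOn
      (s := Finset.univ.filter (fun u : Fin r → Fin d → Bool => Psi2 d w e r u = b))
      (t := (Finset.univ : Finset ({j : Fin r // condP w e j.val} → Bool)))
      (fun (u : Fin r → Fin d → Bool) =>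
        (fun j : {j : Fin r // condP w e j.val} => u j.1 ⟨0, hd⟩))
      (fun u _ => Finset.mem_univ _) ?inj
    · have hc : (Finset.univ : Finset ({j : Fin r // condP w e j.val} → Bool)).card
          = 2 ^ (Finset.univ.filter (fun j : Fin r => condP w e j.val)).card := by
        rw [Finset.card_univ, Fintype.card_fun, Fintype.card_bool, Fintype.card_subtype]
      rw [hc] at hmain
      exact hmain
    case inj =>
      intro u hu v hv huv
      have hub : Psi2 d w e r u = b := (Finset.mem_filter.mp hu).2
      have hvb : Psi2 d w e r v = b := (Finset.mem_filter.mp hv).2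
      funext j c
      by_cases hc : c.val = 0 ∧ condP w e j.val
      · have hc0 : c = ⟨0, hd⟩ := Fin.ext hc.1
        rw [hc0]
        exact congrFun huv ⟨j, hc.2⟩
      · rw [← Psi2_apply_ncond d w e u j c hc, ← Psi2_apply_ncond d w e v j c hc, hub, hvb]
  calc (Finset.univ.filter (fun u : Fin r → Fin d → Bool => Psi2 d w e r u = b)).card
      ≤ 2 ^ (Finset.univ.filter (fun j : Fin r => condP w e j.val)).card := key
    _ ≤ 2 ^ (1 + 2 * ((Finset.Icc 1 r).filter (Bq w e)).card) :=
        Nat.pow_le_pow_right (by norm_num) (card_condP_le w e r)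

open scoped Classical in
lemma card_image_Psi2 (hd : 1 ≤ d) (w e : ℤ → ℝ) (r : ℕ) :
    2 ^ (d*r) ≤ 2 ^ (1 + 2 * ((Finset.Icc 1 r).filter (Bq w e)).card)
      * (Finset.image (Psi2 d w e r) Finset.univ).card := by
  have h1 : (Finset.univ : Finset (Fin r → Fin d → Bool)).card = 2 ^ (d*r) := by
    rw [Finset.card_univ, Fintype.card_fun, Fintype.card_fun, Fintype.card_bool,
      Fintype.card_fin, Fintype.card_fin, ← pow_mul]
  rw [← h1]
  exact Finset.card_le_mul_card_image Finset.univ _ (fun b _ => fiber_card_le d hd w e r b)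


open scoped Classical in
lemma det_bound (hd : 1 ≤ d) (lam h : ℝ) (w e : ℤ → ℝ) (r : ℕ) :
    lam * (2*r*h) + lam * (∑ i ∈ Finset.Icc 1 (2*r), w (i:ℤ))
      + (2*lam*(1-h) - 2*Real.log 2)
          * (∑ k ∈ Finset.Icc 1 r, if Bq w e k then (1:ℝ) else 0)
      - ((d:ℝ)*r + 1) * Real.log 2
    ≤ Real.log (Z d lam h w e 0 0 (2*r)) := by
  set Nn : ℕ := ((Finset.Icc 1 r).filter (Bq w e)).card with hNn
  have hNv : (∑ k ∈ Finset.Icc 1 r, if Bq w e k then (1:ℝ) else 0) = (Nn : ℝ) := by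
    rw [Finset.sum_boole, hNn]
  set cval : ℝ := lam * ((∑ i ∈ Finset.Icc 1 (2*r), (w (i:ℤ) + h))
      + 2*(1-h) * ∑ k ∈ Finset.Icc 1 r, (if Bq w e k then (1:ℝ) else 0)) with hcval
  set T0 : Finset (Fin r → Fin d → Bool) := Finset.image (Psi2 d w e r) Finset.univ with hT0
  -- sum lower bound
  have hsum : (T0.card : ℝ) * Real.exp cval
      ≤ ∑ s : Steps d (2*r), Real.exp (ham d lam h w e 0 0 s) := by
    have hsub : Finset.image (FF d w e r) T0 ⊆ Finset.univ := Finset.subset_univ _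
    have h1 : ∑ s ∈ Finset.image (FF d w e r) T0, Real.exp (ham d lam h w e 0 0 s)
        ≤ ∑ s : Steps d (2*r), Real.exp (ham d lam h w e 0 0 s) :=
      Finset.sum_le_sum_of_subset_of_nonneg hsub (fun s _ _ => le_of_lt (Real.exp_pos _))
    have h2 : ∑ s ∈ Finset.image (FF d w e r) T0, Real.exp (ham d lam h w e 0 0 s)
        = ∑ a ∈ T0, Real.exp (ham d lam h w e 0 0 (FF d w e r a)) :=
      Finset.sum_image (FF_injOn d w e r)
    have h3 : ∀ a ∈ T0, Real.exp (ham d lam h w e 0 0 (FF d w e r a)) = Real.exp cval := by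
      intro a _
      rw [ham_FF d hd lam h w e r a, hcval]
    rw [h2, Finset.sum_congr rfl h3, Finset.sum_const, nsmul_eq_mul] at h1
    exact h1
  -- cardinality lower bound
  have hcard : (2:ℝ) ^ (d*r) ≤ 2 ^ (1 + 2*Nn) * (T0.card : ℝ) := by
    have := card_image_Psi2 d hd w e r
    have hc : ((2:ℕ) ^ (d*r) : ℝ) ≤ ((2 ^ (1 + 2*Nn) * T0.card : ℕ) : ℝ) := by
      exact_mod_cast this
    push_cast at hc
    exact_mod_cast hc
  -- Z lower bound
  have hTpos : (0:ℝ) < 2 ^ (1 + 2*Nn) := by positivity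
  have hZlow : (2:ℝ) ^ (d*r) / 2 ^ (1 + 2*Nn) * Real.exp cval / 2 ^ (d * (2*r))
      ≤ Z d lam h w e 0 0 (2*r) := by
    unfold Z
    apply div_le_div_of_nonneg_right ?_ (by positivity)
    have hstep : (2:ℝ) ^ (d*r) / 2 ^ (1 + 2*Nn) ≤ (T0.card : ℝ) := by
      rw [div_le_iff₀ hTpos]
      linarith [hcard]
    calc (2:ℝ) ^ (d*r) / 2 ^ (1 + 2*Nn) * Real.exp cval
        ≤ (T0.card : ℝ) * Real.exp cval :=
          mul_le_mul_of_nonneg_right hstep (le_of_lt (Real.exp_pos _))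
      _ ≤ _ := hsum
  have hApos : (0:ℝ) < 2 ^ (d*r) / 2 ^ (1 + 2*Nn) * Real.exp cval / 2 ^ (d * (2*r)) := by
    positivity
  have hlog := Real.log_le_log hApos hZlow
  have hlogA : Real.log ((2:ℝ) ^ (d*r) / 2 ^ (1 + 2*Nn) * Real.exp cval / 2 ^ (d * (2*r)))
      = ((d*r : ℕ) : ℝ) * Real.log 2 - ((1 + 2*Nn : ℕ) : ℝ) * Real.log 2 + cval
        - ((d * (2*r) : ℕ) : ℝ) * Real.log 2 := by
    rw [Real.log_div (by positivity) (by positivity),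
        Real.log_mul (by positivity) (Real.exp_ne_zero _),
        Real.log_div (by positivity) (by positivity),
        Real.log_pow, Real.log_pow, Real.log_pow, Real.log_exp]
  rw [hlogA] at hlog
  have hsumwh : (∑ i ∈ Finset.Icc 1 (2*r), (w (i:ℤ) + h))
      = (∑ i ∈ Finset.Icc 1 (2*r), w (i:ℤ)) + (2*(r:ℝ)) * h := by
    rw [Finset.sum_add_distrib, Finset.sum_const, Nat.card_Icc, nsmul_eq_mul]
    push_cast
    ring
  refine le_trans (le_of_eq ?_) hlog
  rw [hcval, hsumwh, hNv]
  push_cast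
  ring


lemma card_steps (n : ℕ) : (Fintype.card (Steps d n) : ℝ) = 2 ^ (d * n) := by
  rw [Fintype.card_fun, Fintype.card_fun, Fintype.card_bool, Fintype.card_fin,
    Fintype.card_fin, ← pow_mul]
  push_cast
  ring_nf

lemma abs_ham_le (lam h : ℝ) (hlam : 0 ≤ lam) (w e : ℤ → ℝ) (hw : ∀ i, w i = 1 ∨ w i = -1)
    (n : ℕ) (s : Steps d n) :
    |ham d lam h w e 0 0 s| ≤ lam * (n * (1 + |h|)) := by
  unfold ham
  rw [abs_mul, abs_of_nonneg hlam]
  apply mul_le_mul_of_nonneg_left ?_ hlam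
  calc |∑ j ∈ Finset.Icc 1 n, del d e (0 + (j:ℤ)) (pos d 0 s j) * (w (0 + (j:ℤ)) + h)|
      ≤ ∑ j ∈ Finset.Icc 1 n, |del d e (0 + (j:ℤ)) (pos d 0 s j) * (w (0 + (j:ℤ)) + h)| :=
        Finset.abs_sum_le_sum_abs _ _
    _ ≤ ∑ j ∈ Finset.Icc 1 n, (1 + |h|) := by
        apply Finset.sum_le_sum
        intro j _
        rw [abs_mul]
        have hdel : |del d e (0 + (j:ℤ)) (pos d 0 s j)| = 1 := by
          unfold del; split <;> simp
        rw [hdel, one_mul]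
        calc |w (0 + (j:ℤ)) + h| ≤ |w (0 + (j:ℤ))| + |h| := abs_add_le _ _
          _ ≤ 1 + |h| := by
              rcases hw (0 + (j:ℤ)) with hww | hww <;> rw [hww] <;> simp
    _ = n * (1 + |h|) := by
        rw [Finset.sum_const, Nat.card_Icc, nsmul_eq_mul]
        norm_num

lemma abs_logZ_le (lam h : ℝ) (hlam : 0 ≤ lam) (w e : ℤ → ℝ) (hw : ∀ i, w i = 1 ∨ w i = -1)
    (n : ℕ) : |Real.log (Z d lam h w e 0 0 n)| ≤ n * (lam * (1 + |h|)) := by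
  set b := lam * (n * (1 + |h|)) with hb
  have hbb : b = n * (lam * (1 + |h|)) := by rw [hb]; ring
  have hham : ∀ s : Steps d n, |ham d lam h w e 0 0 s| ≤ b :=
    fun s => abs_ham_le d lam h hlam w e hw n s
  have hup : Z d lam h w e 0 0 n ≤ Real.exp b := by
    unfold Z
    rw [div_le_iff₀ (by positivity)]
    calc ∑ s : Steps d n, Real.exp (ham d lam h w e 0 0 s)
        ≤ ∑ _s : Steps d n, Real.exp b := by
          apply Finset.sum_le_sum
          intro s _
          exact Real.exp_le_exp.mpr (le_of_abs_le (hham s))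
      _ = (Fintype.card (Steps d n) : ℝ) * Real.exp b := by
          rw [Finset.sum_const, Finset.card_univ, nsmul_eq_mul]
      _ = Real.exp b * 2 ^ (d * n) := by rw [card_steps]; ring
  have hlow : Real.exp (-b) ≤ Z d lam h w e 0 0 n := by
    unfold Z
    rw [le_div_iff₀ (by positivity)]
    calc Real.exp (-b) * 2 ^ (d * n) = (Fintype.card (Steps d n) : ℝ) * Real.exp (-b) := by
          rw [card_steps]; ring
      _ = ∑ _s : Steps d n, Real.exp (-b) := by
          rw [Finset.sum_const, Finset.card_univ, nsmul_eq_mul]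
      _ ≤ ∑ s : Steps d n, Real.exp (ham d lam h w e 0 0 s) := by
          apply Finset.sum_le_sum
          intro s _
          exact Real.exp_le_exp.mpr (neg_le_of_abs_le (hham s))
  rw [← hbb]
  rw [abs_le]
  constructor
  · have := Real.log_le_log (Real.exp_pos (-b)) hlow
    rw [Real.log_exp] at this
    exact this
  · have hZpos : 0 < Z d lam h w e 0 0 n := lt_of_lt_of_le (Real.exp_pos (-b)) hlow
    have := Real.log_le_log hZpos hup
    rw [Real.log_exp] at this
    exact this


lemma measurable_logZ {Om : Type*} [MeasurableSpace Om] (lam h : ℝ) (om et : ℤ → Om → ℝ)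
    (hom : ∀ i, Measurable (om i)) (het : ∀ i, Measurable (et i)) (n : ℕ) :
    Measurable (fun a => Real.log (Z d lam h (fun i => om i a) (fun i => et i a) 0 0 n)) := by
  apply Real.measurable_log.comp
  unfold Z
  apply Measurable.div_const
  apply Finset.measurable_sum
  intro s _
  apply Real.measurable_exp.comp
  unfold ham
  apply Measurable.const_mul
  apply Finset.measurable_sum
  intro j _
  apply Measurable.mul
  · unfold del
    by_cases hp : pos d 0 s j = (0 : Fin d → ℤ)
    · simp only [hp, true_and]
      exact Measurable.ite ((het _) (measurableSet_singleton 1)) measurable_const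
        measurable_const
    · simp only [hp, false_and, if_false]
      exact measurable_const
  · exact (hom _).add_const h

end Hetero

namespace Hetero

set_option maxHeartbeats 2000000

/-- **Lemma 2.3 (localized part).** For every `p ∈ (0,1]`, `λ > 0` and
`h < 1 - (2d - (1-p)) log 2 / (pλ)`, one has `Φ_p(λ,h) > λh` (localization); in
particular the localized region is nonempty.  Here `Φ` denotes the deterministic free
energy `Φ_p(λ,h) = lim (1/n) log Z^n_{0,0}`. -/
theorem localized_region_nonempty
    (d : ℕ) (hd : 1 ≤ d) (lam h p : ℝ) (hlam : 0 < lam)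
    (hp : p ∈ Set.Ioc (0:ℝ) 1)
    (hh : h < 1 - (2 * d - (1 - p)) * Real.log 2 / (p * lam))
    {Ω : Type*} [MeasurableSpace Ω] (μ : MeasureTheory.Measure Ω) [MeasureTheory.IsProbabilityMeasure μ]
    (om et : ℤ → Ω → ℝ)
    (hom_meas : ∀ i, Measurable (om i)) (het_meas : ∀ i, Measurable (et i))
    (hom_val : ∀ i a, om i a = 1 ∨ om i a = -1)
    (het_val : ∀ i a, et i a = 1 ∨ et i a = -1)
    (hom_dist : ∀ i, μ {a | om i a = 1} = ENNReal.ofReal (1/2))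
    (het_dist : ∀ i, μ {a | et i a = 1} = ENNReal.ofReal p)
    (hindep : ProbabilityTheory.iIndepFun
      (Sum.elim om et) μ)
    (Φ : ℝ)
    (hΦ : ∀ᵐ a ∂μ, Tendsto
      (fun n : ℕ => (1 / n : ℝ) * Real.log (Z d lam h (fun i => om i a) (fun i => et i a) 0 0 n))
      atTop (nhds Φ)) :
    lam * h < Φ := by
  classical
  obtain ⟨hp0, hp1⟩ := hp
  have hlog2 : (0:ℝ) < Real.log 2 := Real.log_pos (by norm_num)
  set C : ℝ := lam * (1 + |h|) with hC
  have hC0 : 0 ≤ C := by positivity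
  set g : ℕ → Ω → ℝ := fun n a =>
    (1/n : ℝ) * Real.log (Z d lam h (fun i => om i a) (fun i => et i a) 0 0 n) with hg
  have hmeaslogZ : ∀ n : ℕ,
      Measurable (fun a => Real.log (Z d lam h (fun i => om i a) (fun i => et i a) 0 0 n)) :=
    fun n => measurable_logZ d lam h om et hom_meas het_meas n
  have hmeas : ∀ n, Measurable (g n) := fun n => (hmeaslogZ n).const_mul _
  have hblogZ : ∀ (n : ℕ) a,
      |Real.log (Z d lam h (fun i => om i a) (fun i => et i a) 0 0 n)| ≤ n * C :=
    fun n a => abs_logZ_le d lam h (le_of_lt hlam) (fun i => om i a) (fun i => et i a)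
      (fun i => hom_val i a) n
  have hbound : ∀ n a, |g n a| ≤ C := by
    intro n a
    rcases Nat.eq_zero_or_pos n with h0 | hn
    · subst h0
      simp only [hg, Nat.cast_zero, div_zero, zero_mul, abs_zero]
      exact hC0
    · have hn0 : (0:ℝ) < (n:ℝ) := by exact_mod_cast hn
      have heq : |g n a| = (1/n : ℝ)
          * |Real.log (Z d lam h (fun i => om i a) (fun i => et i a) 0 0 n)| := by
        rw [hg, abs_mul, abs_of_nonneg (by positivity : (0:ℝ) ≤ 1/(n:ℝ))]
      rw [heq]
      calc (1/n : ℝ) * |Real.log (Z d lam h (fun i => om i a) (fun i => et i a) 0 0 n)|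
          ≤ (1/n : ℝ) * (n * C) := mul_le_mul_of_nonneg_left (hblogZ n a) (by positivity)
        _ = C := by field_simp
  have hint : ∀ n, Integrable (g n) μ := fun n =>
    (integrable_const C).mono' (hmeas n).aestronglyMeasurable
      (Eventually.of_forall (fun a => by simpa using hbound n a))
  have hlim : Tendsto (fun n => ∫ a, g n a ∂μ) atTop (nhds Φ) := by
    have h0 := MeasureTheory.tendsto_integral_of_dominated_convergence (F := g)
      (f := fun _ => Φ) (bound := fun _ => C)
      (fun n => (hmeas n).aestronglyMeasurable) (integrable_const C)
      (fun n => Eventually.of_forall (fun a => by simpa using hbound n a)) hΦ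
    simpa using h0
  -- measure computations
  have hPom1 : ∀ t : ℤ, μ {a | om t a = -1} = ENNReal.ofReal (1/2) := by
    intro t
    have hcompl : {a | om t a = -1} = {a | om t a = 1}ᶜ := by
      ext a
      simp only [Set.mem_setOf_eq, Set.mem_compl_iff]
      constructor
      · intro h1 h2; rw [h2] at h1; norm_num at h1
      · intro h1; rcases hom_val t a with h2 | h2
        · exact absurd h2 h1
        · exact h2
    rw [hcompl, measure_compl (s := {a | om t a = 1})
      ((hom_meas t) (measurableSet_singleton 1)) (measure_ne_top μ _),
      hom_dist t, measure_univ]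
    rw [show (1:ENNReal) = ENNReal.ofReal 1 from (ENNReal.ofReal_one).symm,
      ← ENNReal.ofReal_sub _ (by norm_num)]
    norm_num
  have hPB : ∀ t : ℤ, μ ({a | et t a = 1} ∩ {a | om t a = -1}) = ENNReal.ofReal (p * (1/2)) := by
    intro t
    have hind : ProbabilityTheory.IndepFun (et t) (om t) μ :=
      hindep.indepFun (show (Sum.inr t : ℤ ⊕ ℤ) ≠ Sum.inl t by simp)
    have hmul := hind.measure_inter_preimage_eq_mul {1} {-1}
      (measurableSet_singleton _) (measurableSet_singleton _)
    calc μ ({a | et t a = 1} ∩ {a | om t a = -1})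
        = μ (et t ⁻¹' {1}) * μ (om t ⁻¹' {-1}) := hmul
      _ = ENNReal.ofReal p * ENNReal.ofReal (1/2) := by
          rw [show et t ⁻¹' {1} = {a | et t a = 1} from rfl,
            show om t ⁻¹' {-1} = {a | om t a = -1} from rfl, het_dist t, hPom1 t]
      _ = ENNReal.ofReal (p * (1/2)) := (ENNReal.ofReal_mul hp0.le).symm
  have hsind : ∀ t : ℤ, MeasurableSet ({a | et t a = 1} ∩ {a | om t a = -1}) :=
    fun t => ((het_meas t) (measurableSet_singleton 1)).inter
      ((hom_meas t) (measurableSet_singleton (-1)))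
  have hEind : ∀ t : ℤ,
      ∫ a, (if et t a = 1 ∧ om t a = -1 then (1:ℝ) else 0) ∂μ = p * (1/2) := by
    intro t
    have heq : (fun a => (if et t a = 1 ∧ om t a = -1 then (1:ℝ) else 0))
        = Set.indicator ({a | et t a = 1} ∩ {a | om t a = -1}) (fun _ => (1:ℝ)) := by
      funext a
      by_cases hcd : et t a = 1 ∧ om t a = -1
      · have hmem : a ∈ ({a | et t a = 1} ∩ {a | om t a = -1}) := ⟨hcd.1, hcd.2⟩
        rw [Set.indicator_of_mem hmem, if_pos hcd]
      · have hmem : a ∉ ({a | et t a = 1} ∩ {a | om t a = -1}) := fun hm => hcd ⟨hm.1, hm.2⟩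
        rw [Set.indicator_of_notMem hmem, if_neg hcd]
    rw [heq, MeasureTheory.integral_indicator_const (1:ℝ) (hsind t), measureReal_def, hPB t, smul_eq_mul,
      mul_one, ENNReal.toReal_ofReal (by positivity)]
  have hind_int : ∀ t : ℤ,
      Integrable (fun a => if et t a = 1 ∧ om t a = -1 then (1:ℝ) else 0) μ := by
    intro t
    have heq : (fun a => (if et t a = 1 ∧ om t a = -1 then (1:ℝ) else 0))
        = Set.indicator ({a | et t a = 1} ∩ {a | om t a = -1}) (fun _ => (1:ℝ)) := by
      funext a
      by_cases hcd : et t a = 1 ∧ om t a = -1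
      · have hmem : a ∈ ({a | et t a = 1} ∩ {a | om t a = -1}) := ⟨hcd.1, hcd.2⟩
        rw [Set.indicator_of_mem hmem, if_pos hcd]
      · have hmem : a ∉ ({a | et t a = 1} ∩ {a | om t a = -1}) := fun hm => hcd ⟨hm.1, hm.2⟩
        rw [Set.indicator_of_notMem hmem, if_neg hcd]
    rw [heq]
    exact (integrable_const (1:ℝ)).indicator (hsind t)
  have hom_int : ∀ t : ℤ, Integrable (om t) μ := by
    intro t
    apply (integrable_const (1:ℝ)).mono' (hom_meas t).aestronglyMeasurable
    apply Eventually.of_forall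
    intro a
    rcases hom_val t a with h1 | h1 <;> rw [Real.norm_eq_abs, h1] <;> norm_num
  have hEom : ∀ t : ℤ, ∫ a, om t a ∂μ = 0 := by
    intro t
    have hs : MeasurableSet {a | om t a = -1} := (hom_meas t) (measurableSet_singleton (-1))
    have heq : (fun a => om t a)
        = fun a => 1 - 2 * Set.indicator {a | om t a = -1} (fun _ => (1:ℝ)) a := by
      funext a
      simp only [Set.indicator_apply, Set.mem_setOf_eq]
      rcases hom_val t a with h1 | h1
      · rw [if_neg (show ¬ om t a = -1 by rw [h1]; norm_num), h1]; ring
      · rw [if_pos h1, h1]; ring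
    rw [heq, integral_sub (integrable_const 1)
      (((integrable_const (1:ℝ)).indicator hs).const_mul 2)]
    rw [integral_const, integral_const_mul,
      MeasureTheory.integral_indicator_const (1:ℝ) hs, measureReal_def, measureReal_def, hPom1 t, measure_univ, smul_eq_mul,
      smul_eq_mul, mul_one, ENNReal.toReal_ofReal (by norm_num), ENNReal.toReal_one]
    norm_num
  -- lower bound on the integral along even times
  have hIlow : ∀ r : ℕ, 1 ≤ r →
      lam*h + (lam*(1-h) - Real.log 2) * (p/2) - ((d:ℝ)/2)*Real.log 2 - Real.log 2/(2*r)
        ≤ ∫ a, g (2*r) a ∂μ := by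
    intro r hr
    have hr0 : (0:ℝ) < (r:ℝ) := by exact_mod_cast hr
    set G : Ω → ℝ := fun a =>
      lam * (2*r*h) + lam * (∑ i ∈ Finset.Icc 1 (2*r), om (i:ℤ) a)
        + (2*lam*(1-h) - 2*Real.log 2)
          * (∑ k ∈ Finset.Icc 1 r,
              if et (2*(k:ℤ)) a = 1 ∧ om (2*(k:ℤ)) a = -1 then (1:ℝ) else 0)
        - ((d:ℝ)*r + 1) * Real.log 2 with hGdef
    have hGle : ∀ a, G a
        ≤ Real.log (Z d lam h (fun i => om i a) (fun i => et i a) 0 0 (2*r)) := by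
      intro a
      have hdb := det_bound d hd lam h (fun i => om i a) (fun i => et i a) r
      have hconv : (∑ k ∈ Finset.Icc 1 r,
            if Bq (fun i => om i a) (fun i => et i a) k then (1:ℝ) else 0)
          = (∑ k ∈ Finset.Icc 1 r,
            if et (2*(k:ℤ)) a = 1 ∧ om (2*(k:ℤ)) a = -1 then (1:ℝ) else 0) :=
        Finset.sum_congr rfl (fun k _ => if_congr Iff.rfl rfl rfl)
      rw [hconv] at hdb
      exact hdb
    have hintlogZ : Integrable
        (fun a => Real.log (Z d lam h (fun i => om i a) (fun i => et i a) 0 0 (2*r))) μ :=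
      (integrable_const ((2*r : ℕ) * C)).mono' (hmeaslogZ (2*r)).aestronglyMeasurable
        (Eventually.of_forall (fun a => by simpa using hblogZ (2*r) a))
    have hI1 : Integrable (fun a => lam * ∑ i ∈ Finset.Icc 1 (2*r), om (i:ℤ) a) μ := by
      apply Integrable.const_mul
      exact integrable_finset_sum _ (fun i _ => hom_int (i:ℤ))
    have hI2 : Integrable (fun a => (2*lam*(1-h) - 2*Real.log 2)
        * ∑ k ∈ Finset.Icc 1 r,
            if et (2*(k:ℤ)) a = 1 ∧ om (2*(k:ℤ)) a = -1 then (1:ℝ) else 0) μ := by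
      apply Integrable.const_mul
      exact integrable_finset_sum _ (fun k _ => hind_int (2*(k:ℤ)))
    have hintG : Integrable G μ := by
      rw [hGdef]
      apply Integrable.sub ?_ (integrable_const _)
      apply Integrable.add
      · exact Integrable.add (integrable_const _) hI1
      · exact hI2
    have hmono := integral_mono hintG hintlogZ hGle
    have e1 : ∫ a, (lam * ∑ i ∈ Finset.Icc 1 (2*r), om (i:ℤ) a) ∂μ = 0 := by
      rw [integral_const_mul, integral_finset_sum (f := fun (i : ℕ) => om (i:ℤ)) _ (fun i _ => hom_int (i:ℤ))]
      simp [hEom]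
    have e2 : ∫ a, ((2*lam*(1-h) - 2*Real.log 2)
          * ∑ k ∈ Finset.Icc 1 r,
              if et (2*(k:ℤ)) a = 1 ∧ om (2*(k:ℤ)) a = -1 then (1:ℝ) else 0) ∂μ
        = (2*lam*(1-h) - 2*Real.log 2) * ((r:ℝ) * (p * (1/2))) := by
      rw [integral_const_mul, integral_finset_sum
        (f := fun (k : ℕ) a => if et (2*(k:ℤ)) a = 1 ∧ om (2*(k:ℤ)) a = -1 then (1:ℝ) else 0)
        _ (fun k _ => hind_int (2*(k:ℤ)))]
      simp only [hEind]
      rw [Finset.sum_const, Nat.card_Icc, nsmul_eq_mul]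
      push_cast
      ring
    have hEG : ∫ a, G a ∂μ = lam * (2*r*h)
        + (2*lam*(1-h) - 2*Real.log 2) * ((r:ℝ) * (p * (1/2)))
        - ((d:ℝ)*r + 1) * Real.log 2 := by
      rw [hGdef]
      rw [integral_sub ?i1 (integrable_const _), integral_add ?i2 ?i3,
        integral_add (integrable_const _) ?i4]
      case i1 => exact Integrable.add (Integrable.add (integrable_const _) hI1) hI2
      case i2 => exact Integrable.add (integrable_const _) hI1
      case i3 => exact hI2
      case i4 => exact hI1
      rw [e1, e2, integral_const, integral_const, measureReal_def, measure_univ, ENNReal.toReal_one,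
        one_smul, one_smul]
      ring
    have hgZ : ∫ a, g (2*r) a ∂μ = (1/(2*(r:ℝ)))
        * ∫ a, Real.log (Z d lam h (fun i => om i a) (fun i => et i a) 0 0 (2*r)) ∂μ := by
      rw [hg]
      rw [← integral_const_mul]
      congr 1
      funext a
      push_cast
      ring_nf
    rw [hgZ]
    have hfinal : lam*h + (lam*(1-h) - Real.log 2) * (p/2) - ((d:ℝ)/2)*Real.log 2
        - Real.log 2/(2*r) = (1/(2*(r:ℝ))) * (lam * (2*r*h)
        + (2*lam*(1-h) - 2*Real.log 2) * ((r:ℝ) * (p * (1/2)))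
        - ((d:ℝ)*r + 1) * Real.log 2) := by
      field_simp
      ring
    rw [hfinal]
    apply mul_le_mul_of_nonneg_left ?_ (by positivity)
    rw [← hEG]
    exact hmono
  -- pass to the limit
  set L : ℝ := lam*h + (lam*(1-h) - Real.log 2) * (p/2) - ((d:ℝ)/2)*Real.log 2 with hL
  have hseq : Tendsto (fun r : ℕ => ∫ a, g (2*r) a ∂μ) atTop (nhds Φ) :=
    hlim.comp (Filter.tendsto_atTop_atTop.mpr (fun b => ⟨b, fun a ha => by omega⟩))
  have h0lim : Tendsto (fun r : ℕ => Real.log 2/(2*(r:ℝ))) atTop (nhds 0) := by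
    have heq : (fun r : ℕ => Real.log 2/(2*(r:ℝ)))
        = fun r : ℕ => (Real.log 2/2) * (1/(r:ℝ)) := by
      funext r
      rw [div_mul_div_comm, mul_one]
    rw [heq]
    have := tendsto_one_div_atTop_nhds_zero_nat.const_mul (Real.log 2/2)
    simpa using this
  have hlbt : Tendsto (fun r : ℕ => L - Real.log 2/(2*(r:ℝ))) atTop (nhds L) := by
    have := tendsto_const_nhds (x := L) (f := atTop (α := ℕ)) |>.sub h0lim
    simpa using this
  have hLle : L ≤ Φ := by
    apply le_of_tendsto_of_tendsto hlbt hseq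
    filter_upwards [eventually_ge_atTop 1] with r hr
    have := hIlow r hr
    rw [hL]
    linarith
  -- strict inequality
  have hplam : 0 < p * lam := mul_pos hp0 hlam
  have hkey : (2*(d:ℝ) - (1 - p)) * Real.log 2 < (1-h)*(p*lam) := by
    have h2 : (2*(d:ℝ) - (1-p)) * Real.log 2/(p*lam) < 1 - h := by linarith [hh]
    calc (2*(d:ℝ) - (1 - p)) * Real.log 2
        = ((2*(d:ℝ) - (1-p)) * Real.log 2/(p*lam)) * (p*lam) := by
          field_simp
      _ < (1-h)*(p*lam) := mul_lt_mul_of_pos_right h2 hplam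
  have hd1 : (1:ℝ) ≤ (d:ℝ) := by exact_mod_cast hd
  have hLgt : lam*h < L := by
    rw [hL]
    nlinarith [mul_nonneg (sub_nonneg.mpr hd1) hlog2.le, hp0, hp1, hlog2, hkey]
  linarith



end Hetero
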